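/- Let F be a field and σ a ring automorphism of F with σ ∘ σ = id. The centralizer K_{1,σ} = {g ∈ SL₂(F) : θ_{1,σ}(g) = g} acts transitively on the projective line ℙ¹(F) if and only if: (a) there is no x ∈ F with x·σ(x) = -1, and (b) for all x, y ∈ F there exists z ∈ F with x·σ(x) + y·σ(y) = z·σ(z). -/

import Mathlib

open Matrix

section Aux
variable {F : Type*} [Field F]

private lemma flip_Ainv : (!![0,1;-1,0] : Matrix (Fin 2) (Fin 2) F)⁻¹ = !![0,-1;1,0] := by
  apply Matrix.inv_eq_right_inv
  rw [Matrix.mul_fin_two, Matrix.one_fin_two]; norm_num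

private lemma flip_mapK (σ : F ≃+* F) (a b c d : F) :
    (!![a,b;c,d] : Matrix (Fin 2) (Fin 2) F).map σ = !![σ a, σ b; σ c, σ d] := by
  ext i j; fin_cases i <;> fin_cases j <;> simp

private lemma flip_Kfix (σ : F ≃+* F) (hσ : ∀ x, σ (σ x) = x) (a b : F) :
    !![0,1;-1,0] * (!![a, b; -σ b, σ a] : Matrix (Fin 2) (Fin 2) F).map σ * (!![0,1;-1,0])⁻¹
      = !![a, b; -σ b, σ a] := by
  rw [flip_Ainv, flip_mapK, Matrix.mul_fin_two, Matrix.mul_fin_two]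
  simp [hσ]

private lemma flip_KmulVec (σ : F ≃+* F) (a b : F) (v : Fin 2 → F) :
    (!![a, b; -σ b, σ a] : Matrix (Fin 2) (Fin 2) F).mulVec v
      = ![a * v 0 + b * v 1, -σ b * v 0 + σ a * v 1] := by
  ext i; fin_cases i <;> simp [Matrix.mulVec, dotProduct, Fin.sum_univ_two]

private lemma flip_param (σ : F ≃+* F) (hσ : ∀ x, σ (σ x) = x)
    (hn : ¬ ∃ x : F, x * σ x = -1)
    (hs : ∀ x y : F, ∃ z : F, x * σ x + y * σ y = z * σ z)
    (w : Fin 2 → F) (hw : w ≠ 0) :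
    ∃ a b z : F, z ≠ 0 ∧ a * σ a + b * σ b = 1 ∧ w 0 = z * a ∧ w 1 = z * (-σ b) := by
  obtain ⟨z, hz⟩ := hs (w 0) (w 1)
  have hz0 : z ≠ 0 := by
    rintro rfl
    simp only [map_zero, mul_zero] at hz
    by_cases h1 : w 1 = 0
    · have h0 : w 0 = 0 := by
        have : w 0 * σ (w 0) = 0 := by rw [h1] at hz; simpa using hz
        rcases mul_eq_zero.1 this with h | h
        · exact h
        · exact σ.injective (by simpa using h)
      exact hw (by funext i; fin_cases i <;> simp [h0, h1])
    · refine hn ⟨w 0 / w 1, ?_⟩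
      have hσ1 : σ (w 1) ≠ 0 := fun h => h1 (σ.injective (by simpa using h))
      rw [map_div₀]
      field_simp
      linear_combination hz
  have hσz : σ z ≠ 0 := fun h => hz0 (σ.injective (by simpa using h))
  refine ⟨w 0 / z, σ (-(w 1 / z)), z, hz0, ?_, by field_simp, ?_⟩
  · rw [map_div₀, hσ, map_neg, map_div₀]
    field_simp
    linear_combination hz
  · rw [hσ, neg_neg]
    field_simp

end Aux

theorem standard_flip_transitive_iff {F : Type*} [Field F]
    (σ : F ≃+* F) (hσ : ∀ x, σ (σ x) = x) :
    (∀ v w : Fin 2 → F, v ≠ 0 → w ≠ 0 →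
      ∃ g : SpecialLinearGroup (Fin 2) F,
        !![0, 1; -1, 0] * (g : Matrix (Fin 2) (Fin 2) F).map σ *
            (!![0, 1; -1, 0])⁻¹ = (g : Matrix (Fin 2) (Fin 2) F) ∧
        ∃ c : F, c ≠ 0 ∧ (g : Matrix (Fin 2) (Fin 2) F).mulVec v = c • w) ↔
    ((¬ ∃ x : F, x * σ x = -1) ∧
      ∀ x y : F, ∃ z : F, x * σ x + y * σ y = z * σ z) := by
  constructor
  · intro H
    have e0 : (![1, 0] : Fin 2 → F) ≠ 0 := by
      intro h; have := congrFun h 0; simp at this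
    -- a generic consequence: for any nonzero (x,y) there is c ≠ 0 with
    -- x σ x + y σ y = (c⁻¹) σ (c⁻¹)... we derive what we need directly
    have key : ∀ x y : F, ¬ (x = 0 ∧ y = 0) →
        ∃ c : F, c ≠ 0 ∧ (c * σ c) * (x * σ x + y * σ y) = 1 := by
      intro x y hxy
      have hw : (![x, y] : Fin 2 → F) ≠ 0 := by
        intro h
        exact hxy ⟨by simpa using congrFun h 0, by simpa using congrFun h 1⟩
      obtain ⟨g, heq, c, hc, hm⟩ := H ![1, 0] ![x, y] e0 hw
      rw [flip_Ainv] at heq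
      have h := Matrix.ext_iff.mpr heq
      have h00 := h 0 0
      have h01 := h 0 1
      simp [Matrix.mul_apply, Matrix.vecMul, dotProduct, Fin.sum_univ_two, Matrix.map_apply] at h00 h01
      have hm0 : (g : Matrix (Fin 2) (Fin 2) F) 0 0 = c * x := by
        have := congrFun hm 0
        simpa [Matrix.mulVec, dotProduct, Fin.sum_univ_two] using this
      have hm1 : (g : Matrix (Fin 2) (Fin 2) F) 1 0 = c * y := by
        have := congrFun hm 1
        simpa [Matrix.mulVec, dotProduct, Fin.sum_univ_two] using this
      have hdet : (g : Matrix (Fin 2) (Fin 2) F).det = 1 := g.2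
      rw [Matrix.det_fin_two] at hdet
      -- g 1 1 = σ (g 0 0), g 0 1 = -σ (g 1 0)
      have h11 : (g : Matrix (Fin 2) (Fin 2) F) 1 1 = σ ((g : Matrix (Fin 2) (Fin 2) F) 0 0) := by
        rw [← h00, hσ]
      rw [h11, ← h01, hm0, hm1] at hdet
      refine ⟨c, hc, ?_⟩
      simp only [_root_.map_mul] at hdet
      linear_combination hdet
    constructor
    · rintro ⟨x, hx⟩
      obtain ⟨c, hc, h1⟩ := key x 1 (by simp)
      rw [hx] at h1
      simp at h1
    · intro x y
      by_cases hxy : x = 0 ∧ y = 0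
      · exact ⟨0, by simp [hxy.1, hxy.2]⟩
      · obtain ⟨c, hc, h1⟩ := key x y hxy
        refine ⟨c⁻¹, ?_⟩
        have hσc : σ c ≠ 0 := fun h => hc (σ.injective (by simpa using h))
        rw [map_inv₀]
        field_simp
        linear_combination h1
  · rintro ⟨hn, hs⟩ v w hv hw
    obtain ⟨a, b, zv, hzv, hnv, hv0, hv1⟩ := flip_param σ hσ hn hs v hv
    obtain ⟨a', b', zw, hzw, hnw, hw0, hw1⟩ := flip_param σ hσ hn hs w hw
    set A0 : F := a' * σ a + b' * σ b with hA0
    set B0 : F := -(a' * b) + b' * a with hB0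
    have hnorm : A0 * σ A0 + B0 * σ B0 = 1 := by
      simp only [hA0, hB0, map_add, _root_.map_mul, map_neg, hσ]
      linear_combination (a' * σ a' + b' * σ b') * hnv + hnw
    have hdet : (!![A0, B0; -σ B0, σ A0] : Matrix (Fin 2) (Fin 2) F).det = 1 := by
      rw [Matrix.det_fin_two_of]
      linear_combination hnorm
    refine ⟨⟨!![A0, B0; -σ B0, σ A0], hdet⟩, flip_Kfix σ hσ A0 B0, zv / zw,
      div_ne_zero hzv hzw, ?_⟩
    show (!![A0, B0; -σ B0, σ A0] : Matrix (Fin 2) (Fin 2) F).mulVec v = (zv / zw) • w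
    rw [flip_KmulVec]
    funext i; fin_cases i
    · show A0 * v 0 + B0 * v 1 = zv / zw * w 0
      rw [hv0, hv1, hw0, hA0, hB0]
      field_simp
      linear_combination a' * hnv
    · show -σ B0 * v 0 + σ A0 * v 1 = zv / zw * w 1
      rw [hv0, hv1, hw1, hA0, hB0]
      simp only [map_add, _root_.map_mul, map_neg, hσ]
      field_simp
      linear_combination (-σ b') * hnv
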